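/- A pair (d, m) ∈ ℤ × (Fin 7 → ℤ) is an exceptional class (d² − ∑ m_i² = −1 and 3d − ∑ m_i = 1) if and only if the multiset of values {m_1, …, m_7} together with d is one of: d = 0 with one entry −1 and six entries 0; d = 1 with two entries 1 and five entries 0; d = 2 with five entries 1 and two entries 0; d = 3 with one entry 2 and six entries 1. The numbers of exceptional classes of these four types are respectively 7, 21, 21 and 7, so E_7 has exactly 56 elements. -/
import Mathlib


/-- The multiset of values of `m : Fin 7 → ℤ`. -/
def mset7 (m : Fin 7 → ℤ) : Multiset ℤ := Finset.univ.val.map m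

/-- A class `(d, m)` in `Λ₇ = ℤ × (Fin 7 → ℤ)` is exceptional if
`d² - ∑ mᵢ² = -1` and `3d - ∑ mᵢ = 1`. -/
def IsExc7 (p : ℤ × (Fin 7 → ℤ)) : Prop :=
  p.1 ^ 2 - ∑ i, (p.2 i) ^ 2 = -1 ∧ 3 * p.1 - ∑ i, p.2 i = 1

/-- The four types `(d, multiset of mᵢ)` of exceptional classes on `S₇`. -/
def excTypes7 : List (ℤ × Multiset ℤ) :=
  [ (0, (-1) ::ₘ Multiset.replicate 6 0),
    (1, Multiset.replicate 2 1 + Multiset.replicate 5 0),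
    (2, Multiset.replicate 5 1 + Multiset.replicate 2 0),
    (3, 2 ::ₘ Multiset.replicate 6 1) ]

/-- `(d, m) ∈ ℤ × (Fin 7 → ℤ)` is exceptional iff `d` together
with the multiset `{m₁, …, m₇}` is one of the four types listed in
`excTypes7`; the numbers of exceptional classes of those types are
respectively `7, 21, 21, 7`, so `E₇` has exactly `56` elements. -/
lemma exc_decomp (M : Multiset ℤ) (h : ∀ x ∈ M, -3 ≤ x ∧ x ≤ 3) :
    M = Multiset.replicate (M.count (-3)) (-3) + Multiset.replicate (M.count (-2)) (-2)
      + Multiset.replicate (M.count (-1)) (-1) + Multiset.replicate (M.count 0) 0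
      + Multiset.replicate (M.count 1) 1 + Multiset.replicate (M.count 2) 2
      + Multiset.replicate (M.count 3) 3 := by
  ext x
  simp only [Multiset.count_add, Multiset.count_replicate]
  by_cases hx : x ∈ M
  · obtain ⟨h1, h2⟩ := h x hx
    interval_cases x <;> simp
  · have h0 : M.count x = 0 := Multiset.count_eq_zero.2 hx
    have hv : ∀ v : ℤ, (if v = x then M.count v else 0) = 0 := by
      intro v; split
      · next hxv => rw [hxv]; exact h0
      · rfl
    rw [h0, hv, hv, hv, hv, hv, hv, hv]

lemma mset7_sum (m : Fin 7 → ℤ) : (mset7 m).sum = ∑ i, m i := rfl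

lemma mset7_card (m : Fin 7 → ℤ) : Multiset.card (mset7 m) = 7 := by simp [mset7]

lemma mset7_sumsq (m : Fin 7 → ℤ) :
    ((mset7 m).map (fun x => x^2)).sum = ∑ i, (m i)^2 := by
  simp [mset7, Multiset.map_map, Finset.sum]

lemma mem_mset7 (m : Fin 7 → ℤ) (i : Fin 7) : m i ∈ mset7 m :=
  Multiset.mem_map_of_mem m (Finset.mem_univ i)

lemma exc_forward (d : ℤ) (m : Fin 7 → ℤ) (h : IsExc7 (d, m)) :
    (d, mset7 m) ∈ excTypes7 := by
  obtain ⟨h1, h2⟩ := h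
  dsimp only at h1 h2
  have hcs : (∑ i, m i) ^ 2 ≤ ((Finset.univ : Finset (Fin 7)).card : ℤ) * ∑ i, (m i) ^ 2 :=
    sq_sum_le_card_mul_sum_sq
  rw [Finset.card_univ] at hcs
  simp only [Fintype.card_fin] at hcs
  push_cast at hcs
  have hd0 : 0 ≤ d := by nlinarith
  have hd3 : d ≤ 3 := by nlinarith
  have hmem : ∀ x ∈ mset7 m, -3 ≤ x ∧ x ≤ 3 := by
    intro x hx
    have hx2 : x ^ 2 ≤ ((mset7 m).map (fun x => x^2)).sum := by
      refine Multiset.single_le_sum ?_ _ (Multiset.mem_map_of_mem _ hx)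
      intro y hy
      obtain ⟨w, _, rfl⟩ := Multiset.mem_map.1 hy
      positivity
    rw [mset7_sumsq] at hx2
    constructor <;> nlinarith
  have hdec := exc_decomp (mset7 m) hmem
  have hc := mset7_card m
  rw [hdec] at hc
  simp only [Multiset.card_add, Multiset.card_replicate] at hc
  set a := (mset7 m).count (-3) with ha
  set b := (mset7 m).count (-2) with hb
  set c := (mset7 m).count (-1) with hcc
  set z := (mset7 m).count 0 with hz
  set e := (mset7 m).count 1 with he
  set f := (mset7 m).count 2 with hf
  set g := (mset7 m).count 3 with hg
  interval_cases d
  · have hS : (mset7 m).sum = -1 := by rw [mset7_sum]; linarith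
    have hQ : ((mset7 m).map fun x => x^2).sum = 1 := by rw [mset7_sumsq]; linarith
    rw [hdec] at hS hQ
    simp only [Multiset.card_add, Multiset.card_replicate, Multiset.sum_add,
      Multiset.sum_replicate, Multiset.map_add, Multiset.map_replicate, nsmul_eq_mul] at hc hS hQ
    norm_num at hS hQ
    have h7 : a = 0 ∧ b = 0 ∧ c = 1 ∧ z = 6 ∧ e = 0 ∧ f = 0 ∧ g = 0 := by omega
    obtain ⟨hA, hB, hC, hZ, hE, hF, hG⟩ := h7
    rw [hdec, hA, hB, hC, hZ, hE, hF, hG]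
    decide
  · have hS : (mset7 m).sum = 2 := by rw [mset7_sum]; linarith
    have hQ : ((mset7 m).map fun x => x^2).sum = 2 := by rw [mset7_sumsq]; linarith
    rw [hdec] at hS hQ
    simp only [Multiset.card_add, Multiset.card_replicate, Multiset.sum_add,
      Multiset.sum_replicate, Multiset.map_add, Multiset.map_replicate, nsmul_eq_mul] at hc hS hQ
    norm_num at hS hQ
    have h7 : a = 0 ∧ b = 0 ∧ c = 0 ∧ z = 5 ∧ e = 2 ∧ f = 0 ∧ g = 0 := by omega
    obtain ⟨hA, hB, hC, hZ, hE, hF, hG⟩ := h7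
    rw [hdec, hA, hB, hC, hZ, hE, hF, hG]
    decide
  · have hS : (mset7 m).sum = 5 := by rw [mset7_sum]; linarith
    have hQ : ((mset7 m).map fun x => x^2).sum = 5 := by rw [mset7_sumsq]; linarith
    rw [hdec] at hS hQ
    simp only [Multiset.card_add, Multiset.card_replicate, Multiset.sum_add,
      Multiset.sum_replicate, Multiset.map_add, Multiset.map_replicate, nsmul_eq_mul] at hc hS hQ
    norm_num at hS hQ
    have h7 : a = 0 ∧ b = 0 ∧ c = 0 ∧ z = 2 ∧ e = 5 ∧ f = 0 ∧ g = 0 := by omega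
    obtain ⟨hA, hB, hC, hZ, hE, hF, hG⟩ := h7
    rw [hdec, hA, hB, hC, hZ, hE, hF, hG]
    decide
  · have hS : (mset7 m).sum = 8 := by rw [mset7_sum]; linarith
    have hQ : ((mset7 m).map fun x => x^2).sum = 10 := by rw [mset7_sumsq]; linarith
    rw [hdec] at hS hQ
    simp only [Multiset.card_add, Multiset.card_replicate, Multiset.sum_add,
      Multiset.sum_replicate, Multiset.map_add, Multiset.map_replicate, nsmul_eq_mul] at hc hS hQ
    norm_num at hS hQ
    have h7 : a = 0 ∧ b = 0 ∧ c = 0 ∧ z = 0 ∧ e = 6 ∧ f = 1 ∧ g = 0 := by omega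
    obtain ⟨hA, hB, hC, hZ, hE, hF, hG⟩ := h7
    rw [hdec, hA, hB, hC, hZ, hE, hF, hG]
    decide

lemma exc_backward (d : ℤ) (m : Fin 7 → ℤ) (h : (d, mset7 m) ∈ excTypes7) : IsExc7 (d, m) := by
  have hs := mset7_sum m
  have hq := mset7_sumsq m
  simp only [excTypes7, List.mem_cons, List.not_mem_nil, or_false, Prod.mk.injEq] at h
  rcases h with ⟨rfl, hM⟩ | ⟨rfl, hM⟩ | ⟨rfl, hM⟩ | ⟨rfl, hM⟩ <;>
    rw [hM] at hs hq <;>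
    simp only [Multiset.map_cons, Multiset.map_add, Multiset.map_replicate,
      Multiset.sum_cons, Multiset.sum_add, Multiset.sum_replicate, nsmul_eq_mul] at hs hq <;>
    norm_num at hs hq <;>
    exact ⟨by dsimp only; linarith, by dsimp only; linarith⟩

lemma type_set_eq (d : ℤ) (T : Multiset ℤ) (V : Finset ℤ) (hV : ∀ x ∈ T, x ∈ V) :
    {p : ℤ × (Fin 7 → ℤ) | p.1 = d ∧ mset7 p.2 = T}
      = (fun m => (d, m)) ''
        ↑((Fintype.piFinset fun _ : Fin 7 => V).filter fun m => mset7 m = T) := by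
  ext ⟨d', m⟩
  simp only [Set.mem_setOf_eq, Set.mem_image, Finset.mem_coe, Finset.mem_filter,
    Fintype.mem_piFinset]
  constructor
  · rintro ⟨rfl, hm⟩
    exact ⟨m, ⟨fun i => hV _ (hm ▸ mem_mset7 m i), hm⟩, rfl⟩
  · rintro ⟨m', ⟨_, hm⟩, heq⟩
    cases heq
    exact ⟨rfl, hm⟩

lemma type_ncard (d : ℤ) (T : Multiset ℤ) (V : Finset ℤ) (hV : ∀ x ∈ T, x ∈ V) :
    {p : ℤ × (Fin 7 → ℤ) | p.1 = d ∧ mset7 p.2 = T}.ncard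
      = ((Fintype.piFinset fun _ : Fin 7 => V).filter fun m => mset7 m = T).card := by
  rw [type_set_eq d T V hV,
    Set.ncard_image_of_injective _ (fun x y h => by simpa using h),
    Set.ncard_coe_finset]

lemma type_finite (d : ℤ) (T : Multiset ℤ) (V : Finset ℤ) (hV : ∀ x ∈ T, x ∈ V) :
    {p : ℤ × (Fin 7 → ℤ) | p.1 = d ∧ mset7 p.2 = T}.Finite := by
  rw [type_set_eq d T V hV]
  exact (Finset.finite_toSet _).image _

lemma card0 : {p : ℤ × (Fin 7 → ℤ) | p.1 = 0 ∧ mset7 p.2 = (-1) ::ₘ Multiset.replicate 6 0}.ncard = 7 := by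
  rw [type_ncard 0 _ ({-1, 0} : Finset ℤ) (by decide)]; decide
lemma card1 : {p : ℤ × (Fin 7 → ℤ) | p.1 = 1 ∧ mset7 p.2 = Multiset.replicate 2 1 + Multiset.replicate 5 0}.ncard = 21 := by
  rw [type_ncard 1 _ ({0, 1} : Finset ℤ) (by decide)]; decide
lemma card2 : {p : ℤ × (Fin 7 → ℤ) | p.1 = 2 ∧ mset7 p.2 = Multiset.replicate 5 1 + Multiset.replicate 2 0}.ncard = 21 := by
  rw [type_ncard 2 _ ({0, 1} : Finset ℤ) (by decide)]; decide
lemma card3 : {p : ℤ × (Fin 7 → ℤ) | p.1 = 3 ∧ mset7 p.2 = 2 ::ₘ Multiset.replicate 6 1}.ncard = 7 := by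
  rw [type_ncard 3 _ ({1, 2} : Finset ℤ) (by decide)]; decide

lemma exc_disjoint (x y : ℤ) (T T' : Multiset ℤ) (hxy : x ≠ y) :
    Disjoint {p : ℤ × (Fin 7 → ℤ) | p.1 = x ∧ mset7 p.2 = T}
      {p : ℤ × (Fin 7 → ℤ) | p.1 = y ∧ mset7 p.2 = T'} := by
  rw [Set.disjoint_left]
  rintro p ⟨h1, -⟩ ⟨h2, -⟩
  exact hxy (h1 ▸ h2 ▸ rfl)

theorem exceptional_classes_S7 :
    (∀ d : ℤ, ∀ m : Fin 7 → ℤ,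
      IsExc7 (d, m) ↔ (d, mset7 m) ∈ excTypes7) ∧
    (List.map
      (fun t => {p : ℤ × (Fin 7 → ℤ) | p.1 = t.1 ∧ mset7 p.2 = t.2}.ncard)
      excTypes7 = [7, 21, 21, 7]) ∧
    {p : ℤ × (Fin 7 → ℤ) | IsExc7 p}.ncard = 56 := by
  have hiff : ∀ d : ℤ, ∀ m : Fin 7 → ℤ, IsExc7 (d, m) ↔ (d, mset7 m) ∈ excTypes7 :=
    fun d m => ⟨exc_forward d m, exc_backward d m⟩
  refine ⟨hiff, ?_, ?_⟩
  · simp only [excTypes7, List.map_cons, List.map_nil]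
    rw [card0, card1, card2, card3]
  · set T0 : Multiset ℤ := (-1) ::ₘ Multiset.replicate 6 0 with hT0
    set T1 : Multiset ℤ := Multiset.replicate 2 1 + Multiset.replicate 5 0 with hT1
    set T2 : Multiset ℤ := Multiset.replicate 5 1 + Multiset.replicate 2 0 with hT2
    set T3 : Multiset ℤ := 2 ::ₘ Multiset.replicate 6 1 with hT3
    have hset : {p : ℤ × (Fin 7 → ℤ) | IsExc7 p}
        = {p : ℤ × (Fin 7 → ℤ) | p.1 = 0 ∧ mset7 p.2 = T0}
          ∪ {p : ℤ × (Fin 7 → ℤ) | p.1 = 1 ∧ mset7 p.2 = T1}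
          ∪ {p : ℤ × (Fin 7 → ℤ) | p.1 = 2 ∧ mset7 p.2 = T2}
          ∪ {p : ℤ × (Fin 7 → ℤ) | p.1 = 3 ∧ mset7 p.2 = T3} := by
      ext ⟨d, m⟩
      simp only [Set.mem_setOf_eq, Set.mem_union, hiff d m, excTypes7, List.mem_cons,
        List.not_mem_nil, or_false, Prod.mk.injEq]
      tauto
    have f0 := type_finite 0 T0 ({-1, 0} : Finset ℤ) (by decide)
    have f1 := type_finite 1 T1 ({0, 1} : Finset ℤ) (by decide)
    have f2 := type_finite 2 T2 ({0, 1} : Finset ℤ) (by decide)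
    have f3 := type_finite 3 T3 ({1, 2} : Finset ℤ) (by decide)
    rw [hset]
    rw [Set.ncard_union_eq (by
        refine Set.disjoint_union_left.2 ⟨Set.disjoint_union_left.2 ⟨?_, ?_⟩, ?_⟩ <;>
          exact exc_disjoint _ _ _ _ (by norm_num))
      ((f0.union f1).union f2) f3]
    rw [Set.ncard_union_eq (by
        refine Set.disjoint_union_left.2 ⟨?_, ?_⟩ <;>
          exact exc_disjoint _ _ _ _ (by norm_num))
      (f0.union f1) f2]
    rw [Set.ncard_union_eq (exc_disjoint _ _ _ _ (by norm_num)) f0 f1]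
    rw [card0, card1, card2, card3]
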